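/- Let n ≥ 1 and let q ≥ 2 be an integer. For every partition λ of n, D_λ(q) ≤ q^{n(n−1)/2}, with equality if and only if λ = (1,1,…,1) (the partition of n into n parts equal to 1). Equivalently, any unipotent character of GL_n(q) other than the Steinberg character has smaller degree than the Steinberg character, whose degree is q^{n(n−1)/2}. -/

import Mathlib

open scoped Classical

/-- The hook length of a cell `c` in a Young diagram `Y`: the number of cells `(i',j')` of `Y`
with `i' ≥ i`, `j' ≥ j` and `i' = i` or `j' = j`, where `c = (i,j)` (0-indexed). -/
def hookLength (Y : YoungDiagram) (c : ℕ × ℕ) : ℕ :=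
  (Y.cells.filter fun d => c.1 ≤ d.1 ∧ c.2 ≤ d.2 ∧ (d.1 = c.1 ∨ d.2 = c.2)).card

/-- The statistic `a(λ) = ∑ᵢ (i-1)·aᵢ` of a partition (rows of the diagram are 0-indexed,
so this is the sum of the row indices of all cells). -/
def aStat (Y : YoungDiagram) : ℕ := ∑ c ∈ Y.cells, c.1

/-- The degree `D_λ(q)` of the unipotent character of `GL_n(q)` indexed by the partition `λ`
(quantized hook formula). -/
noncomputable def Dq (Y : YoungDiagram) (q : ℝ) : ℝ :=
  q ^ aStat Y * (∏ i ∈ Finset.range Y.card, (q ^ (i + 1) - 1)) /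
    ∏ c ∈ Y.cells, (q ^ hookLength Y c - 1)

/-- The degree `D⁻_λ(q)` of the unipotent character of `GU_n(q)` indexed by the partition `λ`,
obtained from the quantized hook formula by replacing `q` with `-q` and adjusting the sign. -/
noncomputable def Dqminus (Y : YoungDiagram) (q : ℝ) : ℝ :=
  |(-q) ^ aStat Y * (∏ i ∈ Finset.range Y.card, ((-q) ^ (i + 1) - 1)) /
    ∏ c ∈ Y.cells, ((-q) ^ hookLength Y c - 1)|

namespace StmtAux

open Finset

/-- General hook length formula in terms of row and column lengths. -/
lemma hook_card (Y : YoungDiagram) {i j : ℕ} (h : (i, j) ∈ Y) :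
    hookLength Y (i, j) = (Y.rowLen i - j) + (Y.colLen j - i) - 1 := by
  classical
  have hset : (Y.cells.filter fun d => i ≤ d.1 ∧ j ≤ d.2 ∧ (d.1 = i ∨ d.2 = j)) =
      ((Finset.Ico j (Y.rowLen i)).image fun j' => (i, j')) ∪
      ((Finset.Ico i (Y.colLen j)).image fun i' => (i', j)) := by
    ext ⟨a, b⟩
    simp only [Finset.mem_filter, Finset.mem_union, Finset.mem_image, Finset.mem_Ico,
      YoungDiagram.mem_cells, Prod.mk.injEq]
    constructor
    · rintro ⟨hmem, hi, hj, hd | hd⟩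
      · left
        refine ⟨b, ⟨hj, ?_⟩, hd.symm, rfl⟩
        rw [← hd]
        exact YoungDiagram.mem_iff_lt_rowLen.mp (by subst hd; exact hmem)
      · right
        refine ⟨a, ⟨hi, ?_⟩, rfl, hd.symm⟩
        rw [← hd]
        exact YoungDiagram.mem_iff_lt_colLen.mp (by subst hd; exact hmem)
    · rintro (⟨b', ⟨h1, h2⟩, rfl, rfl⟩ | ⟨a', ⟨h1, h2⟩, rfl, rfl⟩)
      · exact ⟨YoungDiagram.mem_iff_lt_rowLen.mpr h2, le_refl _, h1, Or.inl rfl⟩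
      · exact ⟨YoungDiagram.mem_iff_lt_colLen.mpr h2, h1, le_refl _, Or.inr rfl⟩
  have hrow : j < Y.rowLen i := YoungDiagram.mem_iff_lt_rowLen.mp h
  have hcol : i < Y.colLen j := YoungDiagram.mem_iff_lt_colLen.mp h
  have hinj1 : Function.Injective fun j' : ℕ => (i, j') := fun a b hab => by
    simpa using hab
  have hinj2 : Function.Injective fun i' : ℕ => (i', j) := fun a b hab => by
    simpa using hab
  have hinter : (((Finset.Ico j (Y.rowLen i)).image fun j' => (i, j')) ∩
      ((Finset.Ico i (Y.colLen j)).image fun i' => (i', j))) = {(i, j)} := by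
    ext ⟨a, b⟩
    simp only [Finset.mem_inter, Finset.mem_image, Finset.mem_Ico, Finset.mem_singleton,
      Prod.mk.injEq]
    constructor
    · rintro ⟨⟨b', hb', rfl, rfl⟩, ⟨a', ha', rfl, rfl⟩⟩
      omega
    · rintro ⟨rfl, rfl⟩
      exact ⟨⟨b, ⟨le_refl _, hrow⟩, rfl, rfl⟩, ⟨a, ⟨le_refl _, hcol⟩, rfl, rfl⟩⟩
  have hcards := Finset.card_union_add_card_inter
    ((Finset.Ico j (Y.rowLen i)).image fun j' => (i, j'))
    ((Finset.Ico i (Y.colLen j)).image fun i' => (i', j))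
  rw [hinter, Finset.card_singleton, Finset.card_image_of_injective _ hinj1,
    Finset.card_image_of_injective _ hinj2, Nat.card_Ico, Nat.card_Ico] at hcards
  unfold hookLength
  rw [hset]
  omega

/-- Removing the first column of a Young diagram. -/
def erase1 (Y : YoungDiagram) : YoungDiagram where
  cells := (Y.cells.filter fun c => 1 ≤ c.2).image fun c => (c.1, c.2 - 1)
  isLowerSet := by
    rintro ⟨c, d⟩ ⟨a, b⟩ hle hcd
    have hac : a ≤ c := hle.1
    have hbd : b ≤ d := hle.2
    simp only [Finset.coe_image, Finset.coe_filter, Set.mem_image, Set.mem_setOf_eq,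
      YoungDiagram.mem_cells, Prod.mk.injEq] at hcd ⊢
    obtain ⟨⟨x, y⟩, ⟨hmem, hy⟩, hx1, hx2⟩ := hcd
    refine ⟨(a, b + 1), ⟨?_, by omega⟩, rfl, by omega⟩
    exact Y.up_left_mem (by omega) (by omega) hmem

lemma mem_erase1 {Y : YoungDiagram} {i j : ℕ} : (i, j) ∈ erase1 Y ↔ (i, j + 1) ∈ Y := by
  constructor
  · intro h
    have : (i, j) ∈ (Y.cells.filter fun c => 1 ≤ c.2).image fun c => (c.1, c.2 - 1) := h
    simp only [Finset.mem_image, Finset.mem_filter, YoungDiagram.mem_cells, Prod.mk.injEq] at this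
    obtain ⟨⟨x, y⟩, ⟨hmem, hy⟩, rfl, h2⟩ := this
    simp only at h2 hy hmem ⊢
    have : y = j + 1 := by omega
    subst this; exact hmem
  · intro h
    show (i, j) ∈ (Y.cells.filter fun c => 1 ≤ c.2).image fun c => (c.1, c.2 - 1)
    simp only [Finset.mem_image, Finset.mem_filter, YoungDiagram.mem_cells, Prod.mk.injEq]
    exact ⟨(i, j + 1), ⟨h, by omega⟩, rfl, rfl⟩

lemma rowLen_erase1 (Y : YoungDiagram) (i : ℕ) : (erase1 Y).rowLen i = Y.rowLen i - 1 := by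
  have h : ∀ j, (j < (erase1 Y).rowLen i) ↔ j < Y.rowLen i - 1 := by
    intro j
    rw [← YoungDiagram.mem_iff_lt_rowLen, mem_erase1, YoungDiagram.mem_iff_lt_rowLen]
    omega
  have h1 := h ((erase1 Y).rowLen i)
  have h2 := h (Y.rowLen i - 1)
  omega

lemma colLen_erase1 (Y : YoungDiagram) (j : ℕ) : (erase1 Y).colLen j = Y.colLen (j + 1) := by
  have h : ∀ i, (i < (erase1 Y).colLen j) ↔ i < Y.colLen (j + 1) := by
    intro i
    rw [← YoungDiagram.mem_iff_lt_colLen, mem_erase1, YoungDiagram.mem_iff_lt_colLen]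
  have h1 := h ((erase1 Y).colLen j)
  have h2 := h (Y.colLen (j + 1))
  omega

end StmtAux

namespace StmtAux
open Finset

lemma rowLen_pos {Y : YoungDiagram} {i : ℕ} (h : i < Y.colLen 0) : 1 ≤ Y.rowLen i := by
  have : (i, 0) ∈ Y := YoungDiagram.mem_iff_lt_colLen.mpr h
  have := YoungDiagram.mem_iff_lt_rowLen.mp this
  omega

/-- Hook length of a first-column cell. -/
lemma hook_fc (Y : YoungDiagram) {i : ℕ} (h : i < Y.colLen 0) :
    hookLength Y (i, 0) = Y.rowLen i + (Y.colLen 0 - 1 - i) := by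
  have hmem : (i, 0) ∈ Y := YoungDiagram.mem_iff_lt_colLen.mpr h
  rw [hook_card Y hmem]
  have := rowLen_pos h
  omega

/-- Hook transfer to the erased diagram. -/
lemma hook_erase1 {Y : YoungDiagram} {i j : ℕ} (h : (i, j + 1) ∈ Y) :
    hookLength (erase1 Y) (i, j) = hookLength Y (i, j + 1) := by
  have hm : (i, j) ∈ erase1 Y := mem_erase1.mpr h
  rw [hook_card _ hm, hook_card Y h, rowLen_erase1, colLen_erase1]
  have h1 : j + 1 < Y.rowLen i := YoungDiagram.mem_iff_lt_rowLen.mp h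
  have h2 : i < Y.colLen (j + 1) := YoungDiagram.mem_iff_lt_colLen.mp h
  omega

/-- Splitting the cells of `Y` into the first column and the rest. -/
lemma cells_split (Y : YoungDiagram) :
    Y.cells = Y.col 0 ∪ (Y.cells.filter fun c => 1 ≤ c.2) := by
  ext ⟨a, b⟩
  simp only [Finset.mem_union, YoungDiagram.mem_col_iff, Finset.mem_filter,
    YoungDiagram.mem_cells]
  constructor
  · intro h
    rcases Nat.eq_zero_or_pos b with hb | hb
    · exact Or.inl ⟨h, hb⟩
    · exact Or.inr ⟨h, hb⟩
  · rintro (⟨h, _⟩ | ⟨h, _⟩) <;> exact h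

lemma disj_split (Y : YoungDiagram) :
    Disjoint (Y.col 0) (Y.cells.filter fun c => 1 ≤ c.2) := by
  rw [Finset.disjoint_left]
  rintro ⟨a, b⟩ h1 h2
  rw [YoungDiagram.mem_col_iff] at h1
  rw [Finset.mem_filter] at h2
  simp only at h1 h2
  omega

lemma injOn_er (Y : YoungDiagram) : Set.InjOn (fun c : ℕ × ℕ => (c.1, c.2 - 1))
    (Y.cells.filter fun c => 1 ≤ c.2) := by
  rintro ⟨a, b⟩ ha ⟨c, d⟩ hc h
  simp only [Finset.coe_filter, Set.mem_setOf_eq, Finset.mem_coe] at ha hc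
  simp only [Prod.mk.injEq] at h
  have := ha.2; have := hc.2
  simp only [Prod.mk.injEq]
  omega

lemma card_split (Y : YoungDiagram) : Y.card = (erase1 Y).card + Y.colLen 0 := by
  have h1 : (erase1 Y).card = (Y.cells.filter fun c => 1 ≤ c.2).card := by
    show ((Y.cells.filter fun c => 1 ≤ c.2).image fun c => (c.1, c.2 - 1)).card = _
    exact Finset.card_image_of_injOn (injOn_er Y)
  have h2 : Y.card = (Y.col 0).card + (Y.cells.filter fun c => 1 ≤ c.2).card := by
    have := congrArg Finset.card (cells_split Y)
    rwa [Finset.card_union_of_disjoint (disj_split Y)] at this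
  rw [h2, h1, ← YoungDiagram.colLen_eq_card]
  omega

lemma aStat_split (Y : YoungDiagram) :
    aStat Y = aStat (erase1 Y) + ∑ i ∈ range (Y.colLen 0), i := by
  unfold aStat
  rw [show Y.cells = _ from cells_split Y, Finset.sum_union (disj_split Y)]
  have h1 : ∑ c ∈ Y.col 0, c.1 = ∑ i ∈ range (Y.colLen 0), i := by
    rw [YoungDiagram.col_eq_prod, Finset.sum_product]
    simp
  have h2 : ∑ c ∈ (erase1 Y).cells, c.1 = ∑ c ∈ (Y.cells.filter fun c => 1 ≤ c.2), c.1 := by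
    show ∑ c ∈ ((Y.cells.filter fun c => 1 ≤ c.2).image fun c => (c.1, c.2 - 1)), c.1 = _
    rw [Finset.sum_image (injOn_er Y)]
  rw [h1, h2]
  omega

/-- Splitting a product over the cells. -/
lemma prod_split (Y : YoungDiagram) (f : ℕ → ℝ) :
    ∏ c ∈ Y.cells, f (hookLength Y c) =
      (∏ i ∈ range (Y.colLen 0), f (hookLength Y (i, 0))) *
        ∏ c ∈ (erase1 Y).cells, f (hookLength (erase1 Y) c) := by
  rw [show Y.cells = _ from cells_split Y, Finset.prod_union (disj_split Y)]
  congr 1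
  · rw [YoungDiagram.col_eq_prod, Finset.prod_product]
    simp
  · show _ = ∏ c ∈ ((Y.cells.filter fun c => 1 ≤ c.2).image fun c => (c.1, c.2 - 1)),
        f (hookLength (erase1 Y) c)
    rw [Finset.prod_image (injOn_er Y)]
    apply Finset.prod_congr rfl
    rintro ⟨a, b⟩ hab
    rw [Finset.mem_filter] at hab
    have hb : 1 ≤ b := hab.2
    have hmem : (a, b - 1 + 1) ∈ Y := by
      have := hab.1
      rw [YoungDiagram.mem_cells] at this
      convert this using 2
      omega
    have hh := hook_erase1 hmem
    have hbb : b - 1 + 1 = b := by omega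
    rw [hbb] at hh
    simp only
    rw [hh]

lemma sum_rowLen (Y : YoungDiagram) :
    ∑ i ∈ range (Y.colLen 0), Y.rowLen i = Y.card := by
  have hY : Y.cells = (range (Y.colLen 0)).biUnion (fun i => Y.row i) := by
    ext ⟨a, b⟩
    simp only [Finset.mem_biUnion, Finset.mem_range, YoungDiagram.mem_row_iff,
      YoungDiagram.mem_cells]
    constructor
    · intro h
      refine ⟨a, ?_, h, rfl⟩
      have h1 : a < Y.colLen b := YoungDiagram.mem_iff_lt_colLen.mp h
      have h2 := Y.colLen_anti 0 b (Nat.zero_le b)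
      omega
    · rintro ⟨i, _, h, rfl⟩
      exact h
  rw [show Y.card = Y.cells.card from rfl, hY, Finset.card_biUnion]
  · exact Finset.sum_congr rfl fun i _ => Y.rowLen_eq_card (i := i)
  · intro x _ y _ hxy
    rw [Function.onFun, Finset.disjoint_left]
    rintro ⟨a, b⟩ h1 h2
    rw [YoungDiagram.mem_row_iff] at h1 h2
    exact hxy (h1.2.symm.trans h2.2)

end StmtAux

namespace StmtAux
open Finset

lemma weier {ι : Type*} (s : Finset ι) (f : ι → ℝ) (h0 : ∀ i ∈ s, 0 ≤ f i)
    (h1 : ∀ i ∈ s, f i ≤ 1) : 1 - ∑ i ∈ s, f i ≤ ∏ i ∈ s, (1 - f i) := by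
  classical
  induction s using Finset.cons_induction with
  | empty => simp
  | cons a s ha ih =>
    rw [Finset.prod_cons, Finset.sum_cons]
    have hs0 : 0 ≤ ∑ i ∈ s, f i :=
      Finset.sum_nonneg fun i hi => h0 i (Finset.mem_cons_of_mem hi)
    have hfa0 : 0 ≤ f a := h0 a (Finset.mem_cons_self a s)
    have hfa1 : f a ≤ 1 := h1 a (Finset.mem_cons_self a s)
    have ihs : 1 - ∑ i ∈ s, f i ≤ ∏ i ∈ s, (1 - f i) :=
      ih (fun i hi => h0 i (Finset.mem_cons_of_mem hi))
        (fun i hi => h1 i (Finset.mem_cons_of_mem hi))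
    nlinarith [mul_nonneg hfa0 hs0]

lemma prod_lower {x : ℝ} (hx0 : 0 < x) (hx : x ≤ 1 / 2) (r : ℕ) :
    1 - x - x ^ 2 < ∏ j ∈ range r, (1 - x ^ (j + 1)) := by
  have hx1 : x < 1 := by linarith
  cases r with
  | zero => simp; nlinarith
  | succ s =>
    rw [Finset.prod_range_succ']
    have htail : 1 - x ^ 2 / (1 - x) < ∏ j ∈ range s, (1 - x ^ (j + 1 + 1)) := by
      have hW : 1 - ∑ j ∈ range s, x ^ (j + 1 + 1) ≤ ∏ j ∈ range s, (1 - x ^ (j + 1 + 1)) := by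
        apply weier
        · intro i _; positivity
        · intro i _
          calc x ^ (i + 1 + 1) ≤ 1 ^ (i + 1 + 1) :=
                pow_le_pow_left₀ (le_of_lt hx0) (by linarith) _
            _ = 1 := one_pow _
      have hsum : ∑ j ∈ range s, x ^ (j + 1 + 1) < x ^ 2 / (1 - x) := by
        have he : ∑ j ∈ range s, x ^ (j + 1 + 1) = x ^ 2 * ∑ j ∈ range s, x ^ j := by
          rw [Finset.mul_sum]
          apply Finset.sum_congr rfl
          intro j _
          ring
        have hgs : ∑ j ∈ range s, x ^ j = (x ^ s - 1) / (x - 1) := geom_sum_eq (ne_of_lt hx1) s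
        have hxs : 0 < x ^ s := pow_pos hx0 s
        rw [he, hgs, lt_div_iff₀ (by linarith : (0:ℝ) < 1 - x)]
        have hne : x - 1 ≠ 0 := ne_of_lt (by linarith)
        have hee : (x ^ s - 1) / (x - 1) * (1 - x) = 1 - x ^ s := by
          field_simp
          ring
        calc x ^ 2 * ((x ^ s - 1) / (x - 1)) * (1 - x)
            = x ^ 2 * (1 - x ^ s) := by rw [mul_assoc, hee]
          _ < x ^ 2 := by nlinarith [pow_pos hx0 s, pow_pos hx0 2]
      linarith
    have h1x : 0 < 1 - x := by linarith
    calc 1 - x - x ^ 2 = (1 - x ^ 2 / (1 - x)) * (1 - x) := by field_simp; try ring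
      _ < (∏ j ∈ range s, (1 - x ^ (j + 1 + 1))) * (1 - x) := by
          exact mul_lt_mul_of_pos_right htail h1x
      _ = (∏ j ∈ range s, (1 - x ^ (j + 1 + 1))) * (1 - x ^ (0 + 1)) := by norm_num

lemma key2 {q : ℝ} (hq : 2 ≤ q) (r m : ℕ) (hm : 2 ≤ m) (d : ℕ → ℕ)
    (hd : ∑ j ∈ range r, d j = m) :
    ∏ j ∈ range r, (q ^ (m + j + 1) - 1) <
      q ^ (r * m) * ∏ j ∈ range r, (q ^ (j + 1 + d j) - 1) := by
  have hq0 : (0 : ℝ) < q := by linarith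
  have hq1 : (1 : ℝ) < q := by linarith
  have hr : 1 ≤ r := by
    by_contra h
    push_neg at h
    interval_cases r
    simp at hd
    omega
  set x := q⁻¹ with hxdef
  have hx0 : 0 < x := by positivity
  have hx : x ≤ 1 / 2 := by
    rw [hxdef]
    rw [inv_le_comm₀ (by linarith) (by norm_num)]
    linarith
  have hx1 : x < 1 := by linarith
  have hdj : ∀ j ∈ range r, d j ≤ m := by
    intro j hj
    rw [← hd]
    exact Finset.single_le_sum (f := d) (fun i _ => Nat.zero_le _) hj
  -- factorwise inequality
  have hfact : ∀ j ∈ range r,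
      (q ^ (m + j + 1) - 1) * (1 - x ^ (j + 1)) ≤ q ^ (m - d j) * (q ^ (j + 1 + d j) - 1) := by
    intro j hj
    have hdjm := hdj j hj
    have e1 : q ^ (m - d j) * (q ^ (j + 1 + d j) - 1) = q ^ (m + j + 1) - q ^ (m - d j) := by
      rw [mul_sub, mul_one, ← pow_add]
      congr 2
      omega
    have e2 : q ^ (m + j + 1) * x ^ (j + 1) = q ^ m := by
      rw [hxdef, inv_pow, show m + j + 1 = m + (j + 1) by omega, pow_add,
        mul_assoc, mul_inv_cancel₀ (by positivity), mul_one]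
    have e3 : q ^ (m - d j) ≤ q ^ m := pow_le_pow_right₀ (by linarith) (by omega)
    have e4 : x ^ (j + 1) ≤ 1 := le_of_lt (pow_lt_one₀ (le_of_lt hx0) hx1 (by omega))
    nlinarith
  have hApos : ∀ j ∈ range r, (0:ℝ) ≤ (q ^ (m + j + 1) - 1) * (1 - x ^ (j + 1)) := by
    intro j hj
    have h1 : (1:ℝ) ≤ q ^ (m + j + 1) := one_le_pow₀ (le_of_lt hq1)
    have h2 : x ^ (j + 1) ≤ 1 := le_of_lt (pow_lt_one₀ (le_of_lt hx0) hx1 (by omega))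
    nlinarith
  have hstep : (∏ j ∈ range r, (q ^ (m + j + 1) - 1)) * (∏ j ∈ range r, (1 - x ^ (j + 1)))
      ≤ q ^ (r * m - m) * ∏ j ∈ range r, (q ^ (j + 1 + d j) - 1) := by
    rw [← Finset.prod_mul_distrib]
    calc ∏ j ∈ range r, ((q ^ (m + j + 1) - 1) * (1 - x ^ (j + 1)))
        ≤ ∏ j ∈ range r, (q ^ (m - d j) * (q ^ (j + 1 + d j) - 1)) :=
          Finset.prod_le_prod hApos hfact
      _ = (∏ j ∈ range r, q ^ (m - d j)) * ∏ j ∈ range r, (q ^ (j + 1 + d j) - 1) :=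
          Finset.prod_mul_distrib
      _ = q ^ (r * m - m) * ∏ j ∈ range r, (q ^ (j + 1 + d j) - 1) := by
          rw [Finset.prod_pow_eq_pow_sum]
          congr 2
          have h1 : ∑ j ∈ range r, (m - d j) + ∑ j ∈ range r, d j = r * m := by
            rw [← Finset.sum_add_distrib]
            rw [Finset.sum_congr rfl (fun j hj => by have := hdj j hj; omega : 
              ∀ j ∈ range r, m - d j + d j = m)]
            simp [mul_comm]
          omega
  have hA : (0:ℝ) < ∏ j ∈ range r, (q ^ (m + j + 1) - 1) := by
    apply Finset.prod_pos
    intro j _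
    have : (1:ℝ) < q ^ (m + j + 1) := one_lt_pow₀ hq1 (by omega)
    linarith
  have hPl : x ^ m < ∏ j ∈ range r, (1 - x ^ (j + 1)) := by
    have h1 : x ^ m ≤ x ^ 2 := pow_le_pow_of_le_one (le_of_lt hx0) (le_of_lt hx1) hm
    have h2 : x ^ 2 ≤ 1 - x - x ^ 2 := by nlinarith
    have h3 := prod_lower hx0 hx r
    linarith
  have hmain0 : (∏ j ∈ range r, (q ^ (m + j + 1) - 1)) * x ^ m <
      (∏ j ∈ range r, (q ^ (m + j + 1) - 1)) * (∏ j ∈ range r, (1 - x ^ (j + 1))) := by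
    exact mul_lt_mul_of_pos_left hPl hA
  have hmain : (∏ j ∈ range r, (q ^ (m + j + 1) - 1)) * x ^ m <
      q ^ (r * m - m) * ∏ j ∈ range r, (q ^ (j + 1 + d j) - 1) :=
    lt_of_lt_of_le hmain0 hstep
  have hqm : (0:ℝ) < q ^ m := pow_pos hq0 m
  have := mul_lt_mul_of_pos_right hmain hqm
  have e5 : (∏ j ∈ range r, (q ^ (m + j + 1) - 1)) * x ^ m * q ^ m
      = ∏ j ∈ range r, (q ^ (m + j + 1) - 1) := by
    rw [mul_assoc, ← mul_pow, hxdef, inv_mul_cancel₀ (ne_of_gt hq0), one_pow, mul_one]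
  have e6 : q ^ (r * m - m) * (∏ j ∈ range r, (q ^ (j + 1 + d j) - 1)) * q ^ m
      = q ^ (r * m) * ∏ j ∈ range r, (q ^ (j + 1 + d j) - 1) := by
    rw [mul_comm _ (q ^ m), ← mul_assoc, ← pow_add]
    congr 2
    have : m ≤ r * m := Nat.le_mul_of_pos_left m (by omega)
    omega
  rw [e5, e6] at this
  exact this

lemma tele {q : ℝ} (hq : 2 ≤ q) (r : ℕ) :
    (q - 1) * ∏ j ∈ range r, (q ^ (j + 2) - 1) =
      (q ^ (r + 1) - 1) * ∏ j ∈ range r, (q ^ (j + 1) - 1) := by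
  induction r with
  | zero => simp
  | succ s ih =>
    rw [Finset.prod_range_succ, Finset.prod_range_succ, ← mul_assoc, ih]
    ring

lemma key1 {q : ℝ} (hq : 2 ≤ q) (r : ℕ) (d : ℕ → ℕ)
    (hd : ∑ j ∈ range r, d j = 1) :
    ∏ j ∈ range r, (q ^ (1 + j + 1) - 1) <
      q ^ (r * 1) * ∏ j ∈ range r, (q ^ (j + 1 + d j) - 1) := by
  have hq0 : (0 : ℝ) < q := by linarith
  have hq1 : (1 : ℝ) < q := by linarith
  obtain ⟨j0, hj0mem, hj0ne⟩ : ∃ j0 ∈ range r, d j0 ≠ 0 := by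
    apply Finset.exists_ne_zero_of_sum_ne_zero
    omega
  have hdj0 : d j0 = 1 := by
    have h1 : d j0 ≤ 1 := by
      rw [← hd]
      exact Finset.single_le_sum (f := d) (fun i _ => Nat.zero_le _) hj0mem
    omega
  have hrest : ∀ j ∈ (range r).erase j0, d j = 0 := by
    have h2 : d j0 + ∑ j ∈ (range r).erase j0, d j = 1 := by
      rw [Finset.add_sum_erase _ _ hj0mem, hd]
    have h3 : ∑ j ∈ (range r).erase j0, d j = 0 := by omega
    intro j hj
    exact (Finset.sum_eq_zero_iff.mp h3) j hj
  set E := ∏ j ∈ (range r).erase j0, (q ^ (j + 1) - 1) with hE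
  have hEpos : 0 < E := by
    apply Finset.prod_pos
    intro j _
    have : (1:ℝ) < q ^ (j + 1) := one_lt_pow₀ hq1 (by omega)
    linarith
  have hB : ∏ j ∈ range r, (q ^ (j + 1 + d j) - 1) = (q ^ (j0 + 2) - 1) * E := by
    rw [← Finset.mul_prod_erase _ _ hj0mem]
    congr 1
    · rw [hdj0]
    · apply Finset.prod_congr rfl
      intro j hj
      rw [hrest j hj]
  have hQ : ∏ j ∈ range r, (q ^ (j + 1) - 1) = (q ^ (j0 + 1) - 1) * E := by
    rw [← Finset.mul_prod_erase _ _ hj0mem]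
  have hA : ∏ j ∈ range r, (q ^ (1 + j + 1) - 1) = ∏ j ∈ range r, (q ^ (j + 2) - 1) := by
    apply Finset.prod_congr rfl
    intro j _
    congr 2
    omega
  have htele := tele hq r
  -- reduce to numeric inequality
  have hnum : (q ^ (r + 1) - 1) * (q ^ (j0 + 1) - 1) < (q - 1) * q ^ r * (q ^ (j0 + 2) - 1) := by
    have ha : (1:ℝ) ≤ q ^ r := one_le_pow₀ (le_of_lt hq1)
    have hb : (1:ℝ) ≤ q ^ (j0 + 1) := one_le_pow₀ (le_of_lt hq1)
    have e1 : q ^ (r + 1) = q ^ r * q := pow_succ q r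
    have e2 : q ^ (j0 + 2) = q ^ (j0 + 1) * q := pow_succ q (j0 + 1)
    rw [e1, e2]
    have hh : (0:ℝ) ≤ q ^ r * q ^ (j0 + 1) * q * (q - 2) :=
      mul_nonneg (mul_nonneg (mul_nonneg (by linarith) (by linarith)) (by linarith))
        (by linarith)
    nlinarith [hh]
  have hq1pos : (0:ℝ) < q - 1 := by linarith
  refine (mul_lt_mul_iff_right₀ hq1pos).mp ?_
  rw [hA, hB, ← mul_assoc (q - 1), htele, hQ, Nat.mul_one]
  calc (q ^ (r + 1) - 1) * ((q ^ (j0 + 1) - 1) * E)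
      = ((q ^ (r + 1) - 1) * (q ^ (j0 + 1) - 1)) * E := by ring
    _ < ((q - 1) * q ^ r * (q ^ (j0 + 2) - 1)) * E := by
        exact mul_lt_mul_of_pos_right hnum hEpos
    _ = (q - 1) * q ^ r * ((q ^ (j0 + 2) - 1) * E) := by ring

lemma key_lt {q : ℝ} (hq : 2 ≤ q) (r m : ℕ) (hm : 1 ≤ m) (d : ℕ → ℕ)
    (hd : ∑ j ∈ range r, d j = m) :
    ∏ j ∈ range r, (q ^ (m + j + 1) - 1) <
      q ^ (r * m) * ∏ j ∈ range r, (q ^ (j + 1 + d j) - 1) := by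
  rcases Nat.lt_or_ge m 2 with h | h
  · have hm1 : m = 1 := by omega
    subst hm1
    exact key1 hq r d hd
  · exact key2 hq r m h d hd

lemma key_le {q : ℝ} (hq : 2 ≤ q) (r m : ℕ) (d : ℕ → ℕ)
    (hd : ∑ j ∈ range r, d j = m) :
    ∏ j ∈ range r, (q ^ (m + j + 1) - 1) ≤
      q ^ (r * m) * ∏ j ∈ range r, (q ^ (j + 1 + d j) - 1) := by
  rcases Nat.eq_zero_or_pos m with hm | hm
  · subst hm
    have hz : ∀ j ∈ range r, d j = 0 := fun j hj => (Finset.sum_eq_zero_iff.mp hd) j hj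
    rw [mul_zero, pow_zero, one_mul]
    apply le_of_eq
    apply Finset.prod_congr rfl
    intro j hj
    rw [hz j hj]
    norm_num
  · exact le_of_lt (key_lt hq r m hm d hd)

end StmtAux

namespace StmtAux
open Finset

lemma hook_self_pos (Y : YoungDiagram) {c : ℕ × ℕ} (hc : c ∈ Y.cells) :
    1 ≤ hookLength Y c := by
  have : c ∈ Y.cells.filter fun d => c.1 ≤ d.1 ∧ c.2 ≤ d.2 ∧ (d.1 = c.1 ∨ d.2 = c.2) := by
    rw [Finset.mem_filter]
    exact ⟨hc, le_refl _, le_refl _, Or.inl rfl⟩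
  have := Finset.card_pos.mpr ⟨c, this⟩
  unfold hookLength
  omega

lemma den_pos {q : ℝ} (hq : 1 < q) (Y : YoungDiagram) :
    0 < ∏ c ∈ Y.cells, (q ^ hookLength Y c - 1) := by
  apply Finset.prod_pos
  intro c hc
  have h1 : (1:ℝ) < q ^ hookLength Y c := one_lt_pow₀ hq (by have := hook_self_pos Y hc; omega)
  linarith

lemma num_pos {q : ℝ} (hq : 1 < q) (n : ℕ) : 0 < ∏ i ∈ range n, (q ^ (i + 1) - 1) := by
  apply Finset.prod_pos
  intro i _
  have h1 : (1:ℝ) < q ^ (i + 1) := one_lt_pow₀ hq (by omega)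
  linarith

lemma Dq_pos {q : ℝ} (hq : 1 < q) (Y : YoungDiagram) : 0 < Dq Y q := by
  unfold Dq
  exact div_pos (mul_pos (pow_pos (by linarith) _) (num_pos hq _)) (den_pos hq Y)

lemma Dq_empty {q : ℝ} (Y : YoungDiagram) (h : Y.cells = ∅) : Dq Y q = 1 := by
  have hcard : Y.card = 0 := by
    show Y.cells.card = 0
    rw [h]; rfl
  unfold Dq aStat
  rw [h, hcard]
  simp

lemma hd_sum (Y : YoungDiagram) :
    ∑ j ∈ range (Y.colLen 0), (Y.rowLen (Y.colLen 0 - 1 - j) - 1) = (erase1 Y).card := by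
  rw [Finset.sum_range_reflect (fun i => Y.rowLen i - 1) (Y.colLen 0)]
  have h1 : ∑ i ∈ range (Y.colLen 0), (Y.rowLen i - 1) + ∑ i ∈ range (Y.colLen 0), 1
      = ∑ i ∈ range (Y.colLen 0), Y.rowLen i := by
    rw [← Finset.sum_add_distrib]
    apply Finset.sum_congr rfl
    intro i hi
    have := rowLen_pos (Finset.mem_range.mp hi)
    omega
  have h2 := sum_rowLen Y
  have h3 := card_split Y
  simp only [Finset.sum_const, Finset.card_range, smul_eq_mul, mul_one] at h1
  omega

lemma Dq_decomp {q : ℝ} (hq : 2 ≤ q) (Y : YoungDiagram) :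
    Dq Y q = q ^ (∑ i ∈ range (Y.colLen 0), i) *
      ((∏ j ∈ range (Y.colLen 0), (q ^ ((erase1 Y).card + j + 1) - 1)) /
       (∏ j ∈ range (Y.colLen 0), (q ^ (j + 1 + (Y.rowLen (Y.colLen 0 - 1 - j) - 1)) - 1))) *
      Dq (erase1 Y) q := by
  have hq1 : (1:ℝ) < q := by linarith
  set r := Y.colLen 0 with hr
  set m := (erase1 Y).card with hm
  -- numerator split
  have hnum : ∏ i ∈ range Y.card, (q ^ (i + 1) - 1) =
      (∏ i ∈ range m, (q ^ (i + 1) - 1)) * ∏ j ∈ range r, (q ^ (m + j + 1) - 1) := by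
    rw [show Y.card = m + r from card_split Y]
    exact Finset.prod_range_add (fun i => q ^ (i + 1) - 1) m r
  -- first column hooks
  have hfc : ∏ i ∈ range r, (q ^ hookLength Y (i, 0) - 1) =
      ∏ j ∈ range r, (q ^ (j + 1 + (Y.rowLen (r - 1 - j) - 1)) - 1) := by
    rw [← Finset.prod_range_reflect (fun i => q ^ hookLength Y (i, 0) - 1) r]
    apply Finset.prod_congr rfl
    intro j hj
    rw [Finset.mem_range] at hj
    have hlt : r - 1 - j < Y.colLen 0 := by rw [← hr]; omega
    have hfc1 := hook_fc Y hlt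
    have hrl := rowLen_pos (Y := Y) hlt
    rw [← hr] at hfc1
    rw [hfc1]
    congr 2
    omega
  have hden := prod_split Y (fun t => q ^ t - 1)
  have hdenpos : (0:ℝ) < ∏ c ∈ (erase1 Y).cells, (q ^ hookLength (erase1 Y) c - 1) :=
    den_pos hq1 (erase1 Y)
  have hfcpos : (0:ℝ) < ∏ j ∈ range r, (q ^ (j + 1 + (Y.rowLen (r - 1 - j) - 1)) - 1) := by
    apply Finset.prod_pos
    intro j _
    have h1 : (1:ℝ) < q ^ (j + 1 + (Y.rowLen (r - 1 - j) - 1)) := one_lt_pow₀ hq1 (by omega)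
    linarith
  have hast : q ^ aStat Y = q ^ aStat (erase1 Y) * q ^ (∑ i ∈ range r, i) := by
    rw [← pow_add, aStat_split Y]
  unfold Dq
  rw [hnum, hast, hden, hfc]
  field_simp
  ring

lemma Gsplit (m r : ℕ) : ∑ i ∈ range (m + r), i
    = ∑ i ∈ range m, i + (r * m + ∑ i ∈ range r, i) := by
  rw [Finset.sum_range_add (fun i => i) m r]
  have : ∑ j ∈ range r, (m + j) = r * m + ∑ j ∈ range r, j := by
    rw [Finset.sum_add_distrib]
    simp [mul_comm]
  omega

lemma main_le {q : ℝ} (hq : 2 ≤ q) : ∀ n (Y : YoungDiagram), Y.card = n →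
    Dq Y q ≤ q ^ (∑ i ∈ range n, i) := by
  have hq1 : (1:ℝ) < q := by linarith
  intro n
  induction n using Nat.strong_induction_on with
  | _ n ih =>
    intro Y hYn
    rcases Nat.eq_zero_or_pos n with h0 | hpos
    · subst h0
      have hc : Y.cells = ∅ := Finset.card_eq_zero.mp hYn
      rw [Dq_empty Y hc]
      norm_num
    · set r := Y.colLen 0 with hrdef
      set m := (erase1 Y).card with hmdef
      have hrpos : 1 ≤ r := by
        have hcpos : 0 < Y.card := by omega
        obtain ⟨c, hc⟩ := Finset.card_pos.mp hcpos
        have h00 : (0, 0) ∈ Y := Y.up_left_mem (Nat.zero_le _) (Nat.zero_le _)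
          ((YoungDiagram.mem_cells _).mp hc)
        have := YoungDiagram.mem_iff_lt_colLen.mp h00
        omega
      have hcard : n = m + r := by rw [← hYn]; exact card_split Y
      have hmn : m < n := by omega
      have hF : (∏ j ∈ range r, (q ^ (m + j + 1) - 1)) /
          (∏ j ∈ range r, (q ^ (j + 1 + (Y.rowLen (r - 1 - j) - 1)) - 1)) ≤ q ^ (r * m) := by
        rw [div_le_iff₀ (by
          apply Finset.prod_pos
          intro j _
          have h1 : (1:ℝ) < q ^ (j + 1 + (Y.rowLen (r - 1 - j) - 1)) := one_lt_pow₀ hq1 (by omega)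
          linarith)]
        exact key_le hq r m _ (hd_sum Y)
      have hμ : Dq (erase1 Y) q ≤ q ^ (∑ i ∈ range m, i) := ih m hmn (erase1 Y) rfl
      have hμpos : 0 < Dq (erase1 Y) q := Dq_pos hq1 (erase1 Y)
      rw [Dq_decomp hq Y]
      calc q ^ (∑ i ∈ range r, i) *
            ((∏ j ∈ range r, (q ^ (m + j + 1) - 1)) /
             (∏ j ∈ range r, (q ^ (j + 1 + (Y.rowLen (r - 1 - j) - 1)) - 1))) *
            Dq (erase1 Y) q
          ≤ q ^ (∑ i ∈ range r, i) * q ^ (r * m) * q ^ (∑ i ∈ range m, i) := by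
            apply mul_le_mul
            · exact mul_le_mul_of_nonneg_left hF (by positivity)
            · exact hμ
            · linarith
            · positivity
        _ = q ^ (∑ i ∈ range n, i) := by
            rw [← pow_add, ← pow_add, hcard, Gsplit]
            congr 1
            omega

lemma main_lt {q : ℝ} (hq : 2 ≤ q) (Y : YoungDiagram) (h1 : 1 ≤ (erase1 Y).card) :
    Dq Y q < q ^ (∑ i ∈ range Y.card, i) := by
  have hq1 : (1:ℝ) < q := by linarith
  set r := Y.colLen 0 with hrdef
  set m := (erase1 Y).card with hmdef
  have hcard : Y.card = m + r := card_split Y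
  have hDRpos : (0:ℝ) < ∏ j ∈ range r, (q ^ (j + 1 + (Y.rowLen (r - 1 - j) - 1)) - 1) := by
    apply Finset.prod_pos
    intro j _
    have hh : (1:ℝ) < q ^ (j + 1 + (Y.rowLen (r - 1 - j) - 1)) := one_lt_pow₀ hq1 (by omega)
    linarith
  have hF : (∏ j ∈ range r, (q ^ (m + j + 1) - 1)) /
      (∏ j ∈ range r, (q ^ (j + 1 + (Y.rowLen (r - 1 - j) - 1)) - 1)) < q ^ (r * m) := by
    rw [div_lt_iff₀ hDRpos]
    exact key_lt hq r m h1 _ (hd_sum Y)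
  have hμ : Dq (erase1 Y) q ≤ q ^ (∑ i ∈ range m, i) := main_le hq m (erase1 Y) rfl
  have hμpos : 0 < Dq (erase1 Y) q := Dq_pos hq1 (erase1 Y)
  rw [Dq_decomp hq Y]
  calc q ^ (∑ i ∈ range r, i) *
        ((∏ j ∈ range r, (q ^ (m + j + 1) - 1)) /
         (∏ j ∈ range r, (q ^ (j + 1 + (Y.rowLen (r - 1 - j) - 1)) - 1))) *
        Dq (erase1 Y) q
      < q ^ (∑ i ∈ range r, i) * q ^ (r * m) * Dq (erase1 Y) q := by
        apply mul_lt_mul_of_pos_right _ hμpos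
        exact mul_lt_mul_of_pos_left hF (by positivity)
    _ ≤ q ^ (∑ i ∈ range r, i) * q ^ (r * m) * q ^ (∑ i ∈ range m, i) := by
        apply mul_le_mul_of_nonneg_left hμ (by positivity)
    _ = q ^ (∑ i ∈ range Y.card, i) := by
        rw [← pow_add, ← pow_add, hcard, Gsplit]
        congr 1
        omega

lemma main_eq {q : ℝ} (hq : 2 ≤ q) (Y : YoungDiagram) (h0 : (erase1 Y).card = 0) :
    Dq Y q = q ^ (∑ i ∈ range Y.card, i) := by
  have hq1 : (1:ℝ) < q := by linarith
  set r := Y.colLen 0 with hrdef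
  have hcard : Y.card = r := by have := card_split Y; omega
  have hdz : ∀ j ∈ range r, Y.rowLen (r - 1 - j) - 1 = 0 := by
    have hs := hd_sum Y
    rw [h0] at hs
    exact fun j hj => (Finset.sum_eq_zero_iff.mp hs) j hj
  have hratio : (∏ j ∈ range r, (q ^ ((erase1 Y).card + j + 1) - 1)) =
      (∏ j ∈ range r, (q ^ (j + 1 + (Y.rowLen (r - 1 - j) - 1)) - 1)) := by
    apply Finset.prod_congr rfl
    intro j hj
    rw [hdz j hj, h0]
    norm_num
  have hDRpos : (0:ℝ) < ∏ j ∈ range r, (q ^ (j + 1 + (Y.rowLen (r - 1 - j) - 1)) - 1) := by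
    apply Finset.prod_pos
    intro j _
    have hh : (1:ℝ) < q ^ (j + 1 + (Y.rowLen (r - 1 - j) - 1)) := one_lt_pow₀ hq1 (by omega)
    linarith
  have hbot : (erase1 Y).cells = ∅ := Finset.card_eq_zero.mp h0
  rw [Dq_decomp hq Y, hratio, div_self (ne_of_gt hDRpos), Dq_empty _ hbot, hcard]
  ring

lemma m0_iff (Y : YoungDiagram) : (erase1 Y).card = 0 ↔
    Y.cells = (range Y.card).image fun i => (i, 0) := by
  constructor
  · intro h0
    have hbot : (erase1 Y).cells = ∅ := Finset.card_eq_zero.mp h0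
    have hcol : ∀ c ∈ Y.cells, c.2 = 0 := by
      rintro ⟨a, b⟩ hc
      by_contra hb
      have hb1 : 1 ≤ b := by omega
      have : (a, 1) ∈ Y := Y.up_left_mem (le_refl a) hb1 ((YoungDiagram.mem_cells _).mp hc)
      have : (a, 0) ∈ erase1 Y := mem_erase1.mpr this
      rw [← YoungDiagram.mem_cells, hbot] at this
      exact absurd this (Finset.notMem_empty _)
    have hcard : Y.card = Y.colLen 0 := by have := card_split Y; omega
    ext ⟨a, b⟩
    simp only [Finset.mem_image, Finset.mem_range, Prod.mk.injEq]
    constructor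
    · intro hc
      have hb := hcol (a, b) hc
      simp only at hb
      subst hb
      refine ⟨a, ?_, rfl, rfl⟩
      rw [hcard]
      exact YoungDiagram.mem_iff_lt_colLen.mp ((YoungDiagram.mem_cells _).mp hc)
    · rintro ⟨i, hi, rfl, rfl⟩
      rw [YoungDiagram.mem_cells, YoungDiagram.mem_iff_lt_colLen]
      omega
  · intro hcells
    rw [Finset.card_eq_zero, Finset.eq_empty_iff_forall_notMem]
    rintro ⟨a, b⟩ hc
    have : (a, b + 1) ∈ Y := mem_erase1.mp hc
    rw [← YoungDiagram.mem_cells, hcells] at this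
    simp only [Finset.mem_image, Finset.mem_range, Prod.mk.injEq] at this
    obtain ⟨i, _, _, hb⟩ := this
    omega

end StmtAux

theorem stmt5 (n : ℕ) (hn : 1 ≤ n) (q : ℤ) (hq : 2 ≤ q)
    (Y : YoungDiagram) (hY : Y.card = n) :
    Dq Y (q : ℝ) ≤ (q : ℝ) ^ (n * (n - 1) / 2) ∧
      (Dq Y (q : ℝ) = (q : ℝ) ^ (n * (n - 1) / 2) ↔
        Y.cells = (Finset.range n).image fun i => (i, 0)) := by
  subst hY
  have hq' : (2 : ℝ) ≤ (q : ℝ) := by exact_mod_cast hq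
  have hG : Y.card * (Y.card - 1) / 2 = ∑ i ∈ Finset.range Y.card, i :=
    (Finset.sum_range_id Y.card).symm
  rw [hG]
  refine ⟨StmtAux.main_le hq' Y.card Y rfl, ?_, ?_⟩
  · intro heq
    rw [← StmtAux.m0_iff]
    by_contra hm
    have h1 : 1 ≤ (StmtAux.erase1 Y).card := by omega
    have := StmtAux.main_lt hq' Y h1
    rw [heq] at this
    exact lt_irrefl _ this
  · intro hcells
    exact StmtAux.main_eq hq' Y ((StmtAux.m0_iff Y).mpr hcells)
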